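/- arXiv:1410.7834 — 4 statements merged into one kernel-verified Lean document; each statement's English description precedes it below -/
import Mathlib

section
/- Let $2 \le k \le n-2$ and suppose $f\colon \binom{[n]}{k} \to \{0,1\}$ (a Boolean function on the slice) is exactly equal to an affine function $\sum_{i=1}^n c_i x_i$. Then either $f$ is constant ($f \equiv 0$ or $f \equiv 1$), or there exists $i \in [n]$ such that $f = x_i$ or $f = 1 - x_i$. -/
/-- The theSlice `[n] choose k`: all `k`-element subsets of `Fin n`. -/
def theSlice (n k : ℕ) : Finset (Finset (Fin n)) := Finset.powersetCard k Finset.univ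

lemma mem_theSlice {n k : ℕ} {T : Finset (Fin n)} : T ∈ theSlice n k ↔ T.card = k := by
  simp [theSlice]

lemma exists_mem_theSlice {n : ℕ} (k : ℕ) (S U : Finset (Fin n)) (hSU : S ⊆ U)
    (h1 : S.card ≤ k) (h2 : k ≤ U.card) :
    ∃ T, S ⊆ T ∧ T ⊆ U ∧ T ∈ theSlice n k := by
  obtain ⟨T, hT1, hT2, hT3⟩ := Finset.exists_subsuperset_card_eq hSU h1 h2
  exact ⟨T, hT1, hT2, mem_theSlice.mpr hT3⟩

lemma swap_card {n : ℕ} {T : Finset (Fin n)} {i j : Fin n} (hi : i ∈ T) (hj : j ∉ T) :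
    (insert j (T.erase i)).card = T.card := by
  rw [Finset.card_insert_of_notMem (fun h => hj (Finset.mem_of_mem_erase h)),
    Finset.card_erase_of_mem hi]
  have : 1 ≤ T.card := Finset.card_pos.mpr ⟨i, hi⟩
  omega

lemma swap_sum {n : ℕ} (c : Fin n → ℝ) {T : Finset (Fin n)} {i j : Fin n}
    (hi : i ∈ T) (hj : j ∉ T) :
    ∑ x ∈ insert j (T.erase i), c x = ∑ x ∈ T, c x - c i + c j := by
  rw [Finset.sum_insert (fun h => hj (Finset.mem_of_mem_erase h)),
    Finset.sum_erase_eq_sub hi]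
  ring

/-- a Boolean function on the theSlice (2 ≤ k ≤ n-2) which is exactly an
affine function `∑ c_i x_i` is constant, a dictator `x_i`, or an anti-dictator `1 - x_i`. -/
theorem boolean_affine_on_slice (n k : ℕ) (hk : 2 ≤ k) (hkn : k + 2 ≤ n)
    (f : Finset (Fin n) → ℝ) (c : Fin n → ℝ)
    (hbool : ∀ T ∈ theSlice n k, f T = 0 ∨ f T = 1)
    (haff : ∀ T ∈ theSlice n k, f T = ∑ i ∈ T, c i) :
    (∀ T ∈ theSlice n k, f T = 0) ∨ (∀ T ∈ theSlice n k, f T = 1) ∨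
    (∃ i : Fin n, (∀ T ∈ theSlice n k, f T = if i ∈ T then 1 else 0) ∨
                  (∀ T ∈ theSlice n k, f T = if i ∈ T then 0 else 1)) := by
  have hn4 : 4 ≤ n := by omega
  have hne : (Finset.univ : Finset (Fin n)).Nonempty := ⟨⟨0, by omega⟩, Finset.mem_univ _⟩
  obtain ⟨j0, -, hj0min⟩ := Finset.exists_min_image Finset.univ c hne
  set m := c j0 with hm
  -- swap lemma: differences of coefficients lie in {-1, 0, 1}
  have swap : ∀ i j : Fin n, i ≠ j → c i = c j ∨ c i = c j + 1 ∨ c i = c j - 1 := by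
    intro i j hij
    have hiU : ({i} : Finset (Fin n)) ⊆ Finset.univ.erase j := by
      intro x hx
      simp only [Finset.mem_singleton] at hx
      subst hx
      exact Finset.mem_erase.mpr ⟨hij, Finset.mem_univ _⟩
    obtain ⟨T, hST, hTU, hT⟩ := exists_mem_theSlice k ({i} : Finset (Fin n))
      (Finset.univ.erase j) hiU
      (by rw [Finset.card_singleton]; omega)
      (by rw [Finset.card_erase_of_mem (Finset.mem_univ j), Finset.card_univ,
            Fintype.card_fin]; omega)
    have hiT : i ∈ T := hST (Finset.mem_singleton_self i)
    have hjT : j ∉ T := fun h => (Finset.mem_erase.mp (hTU h)).1 rfl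
    have hT' : insert j (T.erase i) ∈ theSlice n k := by
      rw [mem_theSlice, swap_card hiT hjT]; exact mem_theSlice.mp hT
    have e1 := haff T hT
    have e2 := haff _ hT'
    rw [swap_sum c hiT hjT] at e2
    rcases hbool T hT with h1 | h1 <;> rcases hbool _ hT' with h2 | h2 <;>
      [left; (right; right); (right; left); left] <;> linarith
  -- every coefficient is m or m + 1
  have hval : ∀ i : Fin n, c i = m ∨ c i = m + 1 := by
    intro i
    by_cases h : i = j0
    · left; rw [h]
    · have h1 : m ≤ c i := hj0min i (Finset.mem_univ i)
      rcases swap i j0 h with h2 | h2 | h2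
      · left; exact h2
      · right; exact h2
      · left; linarith
  set A : Finset (Fin n) := Finset.univ.filter (fun i => c i = m + 1) with hA
  have hcA : ∀ i ∈ A, c i = m + 1 := fun i hi => (Finset.mem_filter.mp hi).2
  have hcB : ∀ i : Fin n, i ∉ A → c i = m := by
    intro i hi
    rcases hval i with h | h
    · exact h
    · exact absurd (Finset.mem_filter.mpr ⟨Finset.mem_univ i, h⟩) hi
  -- key value formula : f T = k * m + |T ∩ A|
  have hform : ∀ T ∈ theSlice n k, f T = k * m + ((T ∩ A).card : ℝ) := by
    intro T hT
    rw [haff T hT]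
    have hsplit : ∑ i ∈ T, c i = ∑ i ∈ T ∩ A, c i + ∑ i ∈ T \ A, c i :=
      (Finset.sum_inter_add_sum_sdiff T A c).symm
    rw [hsplit]
    rw [Finset.sum_congr rfl (fun i hi => hcA i (Finset.mem_inter.mp hi).2),
        Finset.sum_congr rfl (fun i hi => hcB i (Finset.mem_sdiff.mp hi).2),
        Finset.sum_const, Finset.sum_const, nsmul_eq_mul, nsmul_eq_mul]
    have hcard : (T ∩ A).card + (T \ A).card = k := by
      rw [Finset.card_inter_add_card_sdiff]; exact mem_theSlice.mp hT
    have hc2 : ((T \ A).card : ℝ) = (k : ℝ) - ((T ∩ A).card : ℝ) := by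
      have h : ((T ∩ A).card : ℝ) + ((T \ A).card : ℝ) = (k : ℝ) := by exact_mod_cast hcard
      linarith
    rw [hc2]; ring
  -- case analysis on |A| and |Aᶜ|
  by_cases hA0 : A = ∅
  · -- all coefficients equal m : f is constant
    obtain ⟨T0, -, -, hT0⟩ := exists_mem_theSlice k (∅ : Finset (Fin n)) Finset.univ (Finset.empty_subset _)
      (by simp) (by rw [Finset.card_univ, Fintype.card_fin]; omega)
    have hconst : ∀ T ∈ theSlice n k, f T = k * m := by
      intro T hT
      rw [hform T hT, hA0]
      simp
    rcases hbool T0 hT0 with h | h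
    · left; intro T hT; rw [hconst T hT, ← hconst T0 hT0, h]
    · right; left; intro T hT; rw [hconst T hT, ← hconst T0 hT0, h]
  by_cases hAn : A = Finset.univ
  · -- all coefficients equal m + 1 : f is constant
    obtain ⟨T0, -, -, hT0⟩ := exists_mem_theSlice k (∅ : Finset (Fin n)) Finset.univ (Finset.empty_subset _)
      (by simp) (by rw [Finset.card_univ, Fintype.card_fin]; omega)
    have hconst : ∀ T ∈ theSlice n k, f T = k * m + k := by
      intro T hT
      rw [hform T hT]
      have : T ∩ A = T := by rw [hAn]; exact Finset.inter_univ T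
      rw [this, mem_theSlice.mp hT]
    rcases hbool T0 hT0 with h | h
    · left; intro T hT; rw [hconst T hT, ← hconst T0 hT0, h]
    · right; left; intro T hT; rw [hconst T hT, ← hconst T0 hT0, h]
  -- now 1 ≤ |A| ≤ n - 1
  by_cases hA1 : A.card = 1
  · -- dictator case
    obtain ⟨i0, hi0⟩ := Finset.card_eq_one.mp hA1
    have hint : ∀ T : Finset (Fin n), (T ∩ A).card = if i0 ∈ T then 1 else 0 := by
      intro T
      rw [hi0]
      split
      · rw [Finset.inter_singleton_of_mem ‹i0 ∈ T›, Finset.card_singleton]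
      · rw [Finset.inter_singleton_of_notMem ‹i0 ∉ T›, Finset.card_empty]
    obtain ⟨T1, hS1, -, hT1⟩ := exists_mem_theSlice k ({i0} : Finset (Fin n)) Finset.univ
      (Finset.subset_univ _) (by rw [Finset.card_singleton]; omega)
      (by rw [Finset.card_univ, Fintype.card_fin]; omega)
    have hi0T1 : i0 ∈ T1 := hS1 (Finset.mem_singleton_self i0)
    obtain ⟨T2, -, hU2, hT2⟩ := exists_mem_theSlice k ∅ (Finset.univ.erase i0)
      (Finset.empty_subset _) (by simp)
      (by rw [Finset.card_erase_of_mem (Finset.mem_univ i0), Finset.card_univ,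
            Fintype.card_fin]; omega)
    have hi0T2 : i0 ∉ T2 := fun h => (Finset.mem_erase.mp (hU2 h)).1 rfl
    have e1 : f T1 = k * m + 1 := by
      rw [hform T1 hT1, hint T1, if_pos hi0T1]; norm_num
    have e2 : f T2 = k * m := by
      rw [hform T2 hT2, hint T2, if_neg hi0T2]; norm_num
    have hkm : (k : ℝ) * m = 0 := by
      rcases hbool T1 hT1 with h1 | h1 <;> rcases hbool T2 hT2 with h2 | h2 <;> linarith
    right; right
    refine ⟨i0, Or.inl (fun T hT => ?_)⟩
    rw [hform T hT, hint T, hkm]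
    split <;> norm_num
  by_cases hB1 : Aᶜ.card = 1
  · -- anti-dictator case
    obtain ⟨j1, hj1⟩ := Finset.card_eq_one.mp hB1
    have hj1A : j1 ∉ A := by
      have : j1 ∈ Aᶜ := by rw [hj1]; exact Finset.mem_singleton_self j1
      simpa using this
    have hint : ∀ T : Finset (Fin n), T.card = k →
        ((T ∩ A).card : ℝ) = if j1 ∈ T then (k : ℝ) - 1 else k := by
      intro T hTk
      have hsd : T \ A = T ∩ Aᶜ := by rw [sdiff_eq]; rfl
      have hTsplit : (T ∩ A).card + (T ∩ Aᶜ).card = k := by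
        rw [← hsd, Finset.card_inter_add_card_sdiff]; exact hTk
      have hTc : (T ∩ Aᶜ).card = if j1 ∈ T then 1 else 0 := by
        rw [hj1]
        split
        · rw [Finset.inter_singleton_of_mem ‹j1 ∈ T›, Finset.card_singleton]
        · rw [Finset.inter_singleton_of_notMem ‹j1 ∉ T›, Finset.card_empty]
      split
      · rename_i h
        rw [if_pos h] at hTc
        have hc : (T ∩ A).card = k - 1 := by omega
        rw [hc, Nat.cast_sub (by omega : 1 ≤ k), Nat.cast_one]
      · rename_i h
        rw [if_neg h] at hTc
        have hc : (T ∩ A).card = k := by omega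
        rw [hc]
    obtain ⟨T1, hS1, -, hT1⟩ := exists_mem_theSlice k ({j1} : Finset (Fin n)) Finset.univ
      (Finset.subset_univ _) (by rw [Finset.card_singleton]; omega)
      (by rw [Finset.card_univ, Fintype.card_fin]; omega)
    have hj1T1 : j1 ∈ T1 := hS1 (Finset.mem_singleton_self j1)
    obtain ⟨T2, -, hU2, hT2⟩ := exists_mem_theSlice k ∅ (Finset.univ.erase j1)
      (Finset.empty_subset _) (by simp)
      (by rw [Finset.card_erase_of_mem (Finset.mem_univ j1), Finset.card_univ,
            Fintype.card_fin]; omega)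
    have hj1T2 : j1 ∉ T2 := fun h => (Finset.mem_erase.mp (hU2 h)).1 rfl
    have e1 : f T1 = k * m + k - 1 := by
      rw [hform T1 hT1, hint T1 (mem_theSlice.mp hT1), if_pos hj1T1]; ring
    have e2 : f T2 = k * m + k := by
      rw [hform T2 hT2, hint T2 (mem_theSlice.mp hT2), if_neg hj1T2]
    have hkm : (k : ℝ) * m + k = 1 := by
      rcases hbool T1 hT1 with h1 | h1 <;> rcases hbool T2 hT2 with h2 | h2 <;> linarith
    right; right
    refine ⟨j1, Or.inr (fun T hT => ?_)⟩
    rw [hform T hT, hint T (mem_theSlice.mp hT)]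
    split <;> linarith
  -- contradiction case: |A| ≥ 2 and |Aᶜ| ≥ 2
  exfalso
  have hA2 : 2 ≤ A.card := by
    have h0 : A.card ≠ 0 := fun h => hA0 (Finset.card_eq_zero.mp h)
    omega
  have hB2 : 2 ≤ Aᶜ.card := by
    have h0 : Aᶜ.card ≠ 0 := by
      intro h
      exact hAn ((Finset.compl_eq_empty_iff _).mp (Finset.card_eq_zero.mp h))
    omega
  obtain ⟨i, i', hiA, hi'A, hii'⟩ := Finset.one_lt_card_iff.mp (by omega : 1 < A.card)
  obtain ⟨j, j', hjB, hj'B, hjj'⟩ := Finset.one_lt_card_iff.mp (by omega : 1 < Aᶜ.card)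
  have hjA : j ∉ A := by simpa using hjB
  have hj'A : j' ∉ A := by simpa using hj'B
  -- find T containing i, i' and avoiding j, j'
  have hsub : ({i, i'} : Finset (Fin n)) ⊆ Finset.univ \ {j, j'} := by
    intro x hx
    rw [Finset.mem_sdiff]
    refine ⟨Finset.mem_univ x, fun hmem => ?_⟩
    rw [Finset.mem_insert, Finset.mem_singleton] at hx hmem
    have hxA : x ∈ A := by rcases hx with rfl | rfl; exacts [hiA, hi'A]
    rcases hmem with rfl | rfl
    exacts [hjA hxA, hj'A hxA]
  obtain ⟨T, hST, hTU, hT⟩ := exists_mem_theSlice k ({i, i'} : Finset (Fin n))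
    (Finset.univ \ {j, j'}) hsub
    (le_trans (Finset.card_insert_le i {i'}) (by rw [Finset.card_singleton]; omega))
    (by
      rw [Finset.card_sdiff_of_subset (Finset.subset_univ _), Finset.card_univ, Fintype.card_fin]
      have h2 : ({j, j'} : Finset (Fin n)).card = 2 := by
        rw [Finset.card_insert_of_notMem (by simpa using hjj'), Finset.card_singleton]
      omega)
  have hiT : i ∈ T := hST (by simp)
  have hi'T : i' ∈ T := hST (by simp)
  have hjT : j ∉ T := fun h => by
    have := Finset.mem_sdiff.mp (hTU h); simp at this
  have hj'T : j' ∉ T := fun h => by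
    have := Finset.mem_sdiff.mp (hTU h); simp at this
  set T2 := insert j (T.erase i) with hT2def
  have hT2 : T2 ∈ theSlice n k := by
    rw [mem_theSlice, swap_card hiT hjT]; exact mem_theSlice.mp hT
  have hi'T2 : i' ∈ T2 := by
    rw [hT2def]
    exact Finset.mem_insert_of_mem (Finset.mem_erase.mpr ⟨hii'.symm, hi'T⟩)
  have hj'T2 : j' ∉ T2 := by
    rw [hT2def]
    simp only [Finset.mem_insert, Finset.mem_erase, not_or]
    exact ⟨fun h => hjj' h.symm, fun h => hj'T h.2⟩
  set T3 := insert j' (T2.erase i') with hT3def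
  have hT3 : T3 ∈ theSlice n k := by
    rw [mem_theSlice, swap_card hi'T2 hj'T2]
    exact mem_theSlice.mp hT2
  have eT2 : f T2 = f T - 1 := by
    rw [haff _ hT2, haff _ hT, hT2def, swap_sum c hiT hjT, hcA i hiA, hcB j hjA]
    ring
  have eT3 : f T3 = f T2 - 1 := by
    rw [haff _ hT3, haff _ hT2, hT3def, swap_sum c hi'T2 hj'T2, hcA i' hi'A, hcB j' hj'A]
    ring
  rcases hbool T hT with h1 | h1 <;> rcases hbool T3 hT3 with h3 | h3 <;> linarith
end

section
/- Let $X$ be hypergeometric with parameters $n, k, t$: $\Pr[X = s] = \binom{t}{s}\binom{n-t}{k-s}/\binom{n}{k}$, where $k, t \le n/2$. Then there exists an absolute constant $\gamma_0 > 0$ and an absolute constant $c > 0$ such that: if $\Pr[X \in \{m, m+1\}] \ge 1 - \gamma_0$ for some integer $m$, then $\Pr[X = 0] \ge c$ and $t \le (3/2)(n/k)$. -/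
/-- The hypergeometric probability `Pr[X = s]` with parameters `n, k, t`:
`C(t,s) C(n-t,k-s) / C(n,k)` (zero for `s > k`). -/
noncomputable def hypPr (n k t s : ℕ) : ℝ :=
  if s ≤ k then ((t.choose s : ℝ) * ((n - t).choose (k - s) : ℝ)) / (n.choose k : ℝ) else 0

lemma hypPr_nonneg (n k t s : ℕ) : 0 ≤ hypPr n k t s := by
  unfold hypPr; split
  · positivity
  · exact le_rfl

lemma hypPr_eq_zero_of_lt (n k t s : ℕ) (h : t < s) : hypPr n k t s = 0 := by
  unfold hypPr; split <;> simp [Nat.choose_eq_zero_of_lt h]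

/-- Sum of hypergeometric probabilities over any finite set is at most 1. -/
lemma hypPr_sum_le_one (n k t : ℕ) (htn : t ≤ n) (hkn : k ≤ n) (S : Finset ℕ) :
    ∑ s ∈ S, hypPr n k t s ≤ 1 := by
  have hC : 0 < (n.choose k : ℝ) := by exact_mod_cast Nat.choose_pos hkn
  have hnat : ∑ s ∈ S.filter (· ≤ k), t.choose s * (n - t).choose (k - s) ≤ n.choose k := by
    have hvdm : n.choose k
        = ∑ ij ∈ Finset.HasAntidiagonal.antidiagonal k, t.choose ij.1 * (n - t).choose ij.2 := by
      rw [← Nat.add_choose_eq]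
      congr 1
      omega
    rw [hvdm]
    have hinj : ∀ x ∈ S.filter (· ≤ k), ∀ y ∈ S.filter (· ≤ k),
        (fun s => (s, k - s)) x = (fun s => (s, k - s)) y → x = y := by
      intro x _ y _ h
      simpa using congrArg Prod.fst h
    calc ∑ s ∈ S.filter (· ≤ k), t.choose s * (n - t).choose (k - s)
        = ∑ ij ∈ (S.filter (· ≤ k)).image (fun s => (s, k - s)),
            t.choose ij.1 * (n - t).choose ij.2 := by rw [Finset.sum_image hinj]
      _ ≤ ∑ ij ∈ Finset.HasAntidiagonal.antidiagonal k, t.choose ij.1 * (n - t).choose ij.2 := by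
          apply Finset.sum_le_sum_of_subset
          intro ij hij
          simp only [Finset.mem_image, Finset.mem_filter] at hij
          obtain ⟨s, ⟨_, hsk⟩, rfl⟩ := hij
          simp [Finset.mem_antidiagonal]
          omega
  calc ∑ s ∈ S, hypPr n k t s
      = ∑ s ∈ S.filter (· ≤ k),
          ((t.choose s * (n - t).choose (k - s) : ℕ) : ℝ) / (n.choose k : ℝ) := by
        rw [Finset.sum_filter]
        apply Finset.sum_congr rfl
        intro s _
        unfold hypPr
        split <;> simp_all <;> push_cast <;> ring
    _ = ((∑ s ∈ S.filter (· ≤ k), t.choose s * (n - t).choose (k - s) : ℕ) : ℝ)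
          / (n.choose k : ℝ) := by rw [← Finset.sum_div]; push_cast; ring
    _ ≤ 1 := by
        rw [div_le_one hC]
        exact_mod_cast hnat

lemma hypPr_le_one (n k t s : ℕ) (htn : t ≤ n) (hkn : k ≤ n) : hypPr n k t s ≤ 1 := by
  simpa using hypPr_sum_le_one n k t htn hkn {s}

lemma hypPr_triple_le_one (n k t b : ℕ) (htn : t ≤ n) (hkn : k ≤ n) :
    hypPr n k t b + hypPr n k t (b+1) + hypPr n k t (b+2) ≤ 1 := by
  have h := hypPr_sum_le_one n k t htn hkn {b, b+1, b+2}
  rw [Finset.sum_insert (by simp), Finset.sum_insert (by simp), Finset.sum_singleton] at h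
  linarith

/-- The key ratio identity between consecutive hypergeometric probabilities. -/
lemma hypPr_ratio (n k t s : ℕ) (hsk : s + 1 ≤ k) (hst : s + 1 ≤ t) (hkn : k + t ≤ n) :
    hypPr n k t (s+1) * (((s+1) * (n - t - k + s + 1) : ℕ) : ℝ) =
    hypPr n k t s * (((t - s) * (k - s) : ℕ) : ℝ) := by
  have hC : (0:ℝ) < (n.choose k : ℝ) := by
    exact_mod_cast Nat.choose_pos (by omega : k ≤ n)
  unfold hypPr
  rw [if_pos hsk, if_pos (by omega : s ≤ k)]
  rw [div_mul_eq_mul_div, div_mul_eq_mul_div, div_eq_div_iff hC.ne' hC.ne']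
  have h1 : t.choose (s+1) * (s+1) = t.choose s * (t - s) := Nat.choose_succ_right_eq t s
  have h2 : (n - t).choose (k - s - 1) * (n - t - k + s + 1) = (n - t).choose (k - s) * (k - s) := by
    have h := Nat.choose_succ_right_eq (n - t) (k - s - 1)
    have e1 : k - s - 1 + 1 = k - s := by omega
    have e2 : n - t - (k - s - 1) = n - t - k + s + 1 := by omega
    rw [e1, e2] at h
    exact h.symm
  have e3 : k - (s + 1) = k - s - 1 := by omega
  rw [e3]
  have key : t.choose (s+1) * (n - t).choose (k - s - 1) * ((s+1) * (n - t - k + s + 1))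
      = t.choose s * (n - t).choose (k - s) * ((t - s) * (k - s)) := by
    calc t.choose (s+1) * (n - t).choose (k - s - 1) * ((s+1) * (n - t - k + s + 1))
        = (t.choose (s+1) * (s+1)) * ((n - t).choose (k - s - 1) * (n - t - k + s + 1)) := by ring
      _ = (t.choose s * (t - s)) * ((n - t).choose (k - s) * (k - s)) := by rw [h1, h2]
      _ = t.choose s * (n - t).choose (k - s) * ((t - s) * (k - s)) := by ring
  have key2 : t.choose (s+1) * (n - t).choose (k - s - 1) * ((s+1) * (n - t - k + s + 1))
        * n.choose k
      = t.choose s * (n - t).choose (k - s) * ((t - s) * (k - s)) * n.choose k := by rw [key]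
  exact_mod_cast key2

/-- `a * C(a-1, j) = C(a, j) * (a - j)`. -/
lemma choose_pred (a j : ℕ) : a * (a-1).choose j = a.choose j * (a - j) := by
  cases a with
  | zero => simp
  | succ b =>
    rw [Nat.succ_sub_one]
    cases j with
    | zero => simp
    | succ i =>
      rw [Nat.add_one_mul_choose_eq, Nat.choose_succ_right_eq]

/-- Symmetry of the hypergeometric distribution in `k` and `t`. -/
lemma hypPr_symm (n k t s : ℕ) (hkn : k + t ≤ n) : hypPr n k t s = hypPr n t k s := by
  unfold hypPr
  by_cases hsk : s ≤ k <;> by_cases hst : s ≤ t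
  · rw [if_pos hsk, if_pos hst]
    have hCk : (0:ℝ) < (n.choose k : ℝ) := by exact_mod_cast Nat.choose_pos (by omega : k ≤ n)
    have hCt : (0:ℝ) < (n.choose t : ℝ) := by exact_mod_cast Nat.choose_pos (by omega : t ≤ n)
    rw [div_eq_div_iff hCk.ne' hCt.ne']
    have key : t.choose s * (n-t).choose (k-s) * n.choose t
        = k.choose s * (n-k).choose (t-s) * n.choose k := by
      have hM : 0 < s.factorial * (t-s).factorial * (k-s).factorial
          * (n - t - k + s).factorial := by positivity
      apply Nat.eq_of_mul_eq_mul_right hM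
      have h1 : t.choose s * s.factorial * (t-s).factorial = t.factorial :=
        Nat.choose_mul_factorial_mul_factorial hst
      have h2 : (n-t).choose (k-s) * (k-s).factorial * (n - t - k + s).factorial
          = (n-t).factorial := by
        have e : n - t - (k - s) = n - t - k + s := by omega
        have := Nat.choose_mul_factorial_mul_factorial (by omega : k - s ≤ n - t)
        rw [e] at this
        exact this
      have h3 : n.choose t * t.factorial * (n-t).factorial = n.factorial :=
        Nat.choose_mul_factorial_mul_factorial (by omega : t ≤ n)
      have h1' : k.choose s * s.factorial * (k-s).factorial = k.factorial :=
        Nat.choose_mul_factorial_mul_factorial hsk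
      have h2' : (n-k).choose (t-s) * (t-s).factorial * (n - t - k + s).factorial
          = (n-k).factorial := by
        have e : n - k - (t - s) = n - t - k + s := by omega
        have := Nat.choose_mul_factorial_mul_factorial (by omega : t - s ≤ n - k)
        rw [e] at this
        exact this
      have h3' : n.choose k * k.factorial * (n-k).factorial = n.factorial :=
        Nat.choose_mul_factorial_mul_factorial (by omega : k ≤ n)
      calc t.choose s * (n-t).choose (k-s) * n.choose t
            * (s.factorial * (t-s).factorial * (k-s).factorial * (n - t - k + s).factorial)
          = (t.choose s * s.factorial * (t-s).factorial)
            * ((n-t).choose (k-s) * (k-s).factorial * (n - t - k + s).factorial)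
            * n.choose t := by ring
        _ = n.choose t * t.factorial * (n-t).factorial := by rw [h1, h2]; ring
        _ = n.factorial := h3
        _ = n.choose k * k.factorial * (n-k).factorial := h3'.symm
        _ = (k.choose s * s.factorial * (k-s).factorial)
            * ((n-k).choose (t-s) * (t-s).factorial * (n - t - k + s).factorial)
            * n.choose k := by rw [h1', h2']; ring
        _ = k.choose s * (n-k).choose (t-s) * n.choose k
            * (s.factorial * (t-s).factorial * (k-s).factorial * (n - t - k + s).factorial) := by
            ring
    exact_mod_cast key
  · rw [if_pos hsk, if_neg hst]
    simp [Nat.choose_eq_zero_of_lt (by omega : t < s)]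
  · rw [if_neg hsk, if_pos hst]
    simp [Nat.choose_eq_zero_of_lt (by omega : k < s)]
  · rw [if_neg hsk, if_neg hst]

/-- Descending product lower bound: `C(n-T, k) ≥ (1-q)^T C(n,k)`. -/
lemma desc_bound (n k : ℕ) (q : ℝ) (hq0 : 0 ≤ q) (hq1 : q ≤ 1) :
    ∀ T, k + T ≤ n → (∀ j, j < T → (k:ℝ) ≤ q * ((n:ℝ) - j)) →
      (1-q)^T * (n.choose k : ℝ) ≤ ((n-T).choose k : ℝ) := by
  intro T
  induction T with
  | zero => intro _ _; simp
  | succ T ih =>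
    intro hTn hj
    have hstep : (1-q) * ((n-T).choose k : ℝ) ≤ ((n-(T+1)).choose k : ℝ) := by
      have hid : (n-T) * (n-T-1).choose k = (n-T).choose k * ((n-T) - k) := choose_pred (n-T) k
      have he : n - (T+1) = n - T - 1 := by omega
      rw [he]
      have hpos : (0:ℝ) < ((n-T : ℕ) : ℝ) := by
        have h : 0 < n - T := by omega
        exact_mod_cast h
      rw [← mul_le_mul_iff_left₀ hpos]
      have hidR : ((n-T-1).choose k : ℝ) * ((n-T:ℕ):ℝ)
          = ((n-T).choose k : ℝ) * (((n-T) - k : ℕ) : ℝ) := by exact_mod_cast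
        (by rw [← hid]; ring : (n-T-1).choose k * (n-T) = (n-T).choose k * ((n-T) - k))
      rw [hidR]
      have hcast1 : (((n-T) - k : ℕ) : ℝ) = ((n:ℝ) - T) - k := by
        have h1 : k ≤ n - T := by omega
        push_cast [Nat.cast_sub h1, Nat.cast_sub (by omega : T ≤ n)]
        ring
      have hcast2 : ((n-T : ℕ) : ℝ) = (n:ℝ) - T := by
        push_cast [Nat.cast_sub (by omega : T ≤ n)]; ring
      rw [hcast1, hcast2]
      have hqj : (k:ℝ) ≤ q * ((n:ℝ) - T) := hj T (by omega)
      have hCnn : (0:ℝ) ≤ ((n-T).choose k : ℝ) := by positivity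
      nlinarith
    calc (1-q)^(T+1) * (n.choose k : ℝ) = (1-q) * ((1-q)^T * (n.choose k : ℝ)) := by ring
      _ ≤ (1-q) * ((n-T).choose k : ℝ) := by
          apply mul_le_mul_of_nonneg_left (ih (by omega) (fun j hjT => hj j (by omega)))
          linarith
      _ ≤ ((n-(T+1)).choose k : ℝ) := hstep

set_option maxRecDepth 40000 in
/-- Lower bound on `Pr[X = 0]` when the mean is at most `3/2` — case `t ≤ k`. -/
lemma p0_bound_aux (n k t : ℕ) (ht : 1 ≤ t) (htk : t ≤ k) (h2k : 2*k ≤ n)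
    (hmu : 2*(k*t) ≤ 3*n) :
    hypPr n k t 0 ≥ 1/2^200 := by
  have hkn : k ≤ n := by omega
  have hktn : k + t ≤ n := by omega
  have hC : (0:ℝ) < (n.choose k : ℝ) := by exact_mod_cast Nat.choose_pos hkn
  have hp0 : hypPr n k t 0 = ((n-t).choose k : ℝ) / (n.choose k : ℝ) := by
    unfold hypPr
    rw [if_pos (by omega : 0 ≤ k)]
    simp
  rw [hp0]
  by_cases hn : n ≤ 200
  · -- small n: use C(n-t,k) ≥ 1, C(n,k) ≤ 2^200
    have h1 : 1 ≤ (n-t).choose k := Nat.choose_pos (by omega : k ≤ n - t)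
    have h2 : n.choose k ≤ 2^200 := by
      calc n.choose k ≤ ∑ m ∈ Finset.range (n+1), n.choose m :=
            Finset.single_le_sum (fun i _ => Nat.zero_le _) (Finset.mem_range.mpr (by omega))
        _ = 2^n := Nat.sum_range_choose n
        _ ≤ 2^200 := Nat.pow_le_pow_right (by norm_num) hn
    have h1' : (1:ℝ) ≤ ((n-t).choose k : ℝ) := by exact_mod_cast h1
    have h2' : (n.choose k : ℝ) ≤ 2^200 := by exact_mod_cast h2
    rw [ge_iff_le, div_le_div_iff₀ (by norm_num) hC, one_mul]
    calc (n.choose k : ℝ) ≤ 2^200 := h2'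
      _ ≤ ((n-t).choose k : ℝ) * 2^200 := by nlinarith
  · have hn200 : 200 < n := by omega
    have htt : 2*(t*t) ≤ 3*n := le_trans (by nlinarith) hmu
    have h8t : 8 * t ≤ n := by nlinarith
    set D : ℕ := n - t + 1 with hDdef
    have hDpos : (0:ℝ) < (D:ℝ) := by positivity
    have hDcast : (D:ℝ) = (n:ℝ) - t + 1 := by
      rw [hDdef]
      push_cast [Nat.cast_sub (by omega : t ≤ n)]
      ring
    set q : ℝ := (k:ℝ) / (D:ℝ) with hqdef
    have hq0 : 0 ≤ q := by positivity
    have htR : 8*(t:ℝ) ≤ (n:ℝ) := by exact_mod_cast h8t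
    have hkR : 2*(k:ℝ) ≤ (n:ℝ) := by exact_mod_cast h2k
    have hmuR : 2*((k:ℝ)*(t:ℝ)) ≤ 3*(n:ℝ) := by exact_mod_cast hmu
    have hq1 : q ≤ 1 := by
      rw [hqdef, div_le_one hDpos, hDcast]
      linarith
    have hq47 : q ≤ 4/7 := by
      rw [hqdef, div_le_div_iff₀ hDpos (by norm_num : (0:ℝ) < 7), hDcast]
      linarith
    have hqt : q * t ≤ 12/7 := by
      rw [hqdef, div_mul_eq_mul_div, div_le_div_iff₀ hDpos (by norm_num : (0:ℝ) < 7), hDcast]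
      linarith
    have hjq : ∀ j, j < t → (k:ℝ) ≤ q * ((n:ℝ) - j) := by
      intro j hj
      have hDnj : (D:ℝ) ≤ (n:ℝ) - j := by
        rw [hDcast]
        have : (j:ℝ) + 1 ≤ t := by exact_mod_cast hj
        linarith
      rw [hqdef, div_mul_eq_mul_div, le_div_iff₀ hDpos]
      nlinarith
    have key := desc_bound n k q hq0 hq1 t (by omega) hjq
    have h1p3 : (0:ℝ) < 1 + 3*q := by linarith
    have hq23 : 1/(1+3*q) ≤ 1 - q := by
      rw [div_le_iff₀ h1p3]
      nlinarith
    have hstep1 : (1/(1+3*q))^t ≤ (1-q)^t :=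
      pow_le_pow_left₀ (by positivity) hq23 t
    have hpow : (1+3*q)^t ≤ Real.exp 6 := by
      calc (1+3*q)^t ≤ (Real.exp (3*q))^t := by
            apply pow_le_pow_left₀ (by linarith)
            linarith [Real.add_one_le_exp (3*q)]
        _ = Real.exp ((t:ℕ) * (3*q)) := (Real.exp_nat_mul (3*q) t).symm
        _ ≤ Real.exp 6 := by
            apply Real.exp_le_exp.mpr
            nlinarith
    have hexp6 : Real.exp 6 ≤ 2^200 := by
      have h6 : Real.exp 6 = (Real.exp 1)^6 := by
        rw [← Real.exp_nat_mul]
        norm_num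
      rw [h6]
      have := Real.exp_one_lt_d9
      calc (Real.exp 1)^6 ≤ (2.7182818286:ℝ)^6 :=
            pow_le_pow_left₀ (le_of_lt (Real.exp_pos 1)) (le_of_lt this) 6
        _ ≤ 2^200 := by norm_num
    have hfin : (1:ℝ)/2^200 ≤ (1-q)^t := by
      calc (1:ℝ)/2^200 ≤ 1/(1+3*q)^t := by
            apply one_div_le_one_div_of_le
            · positivity
            · exact le_trans hpow hexp6
        _ = (1/(1+3*q))^t := by rw [div_pow, one_pow]
        _ ≤ (1-q)^t := hstep1
    rw [ge_iff_le, le_div_iff₀ hC]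
    calc (1:ℝ)/2^200 * (n.choose k : ℝ) ≤ (1-q)^t * (n.choose k : ℝ) := by
          apply mul_le_mul_of_nonneg_right hfin (le_of_lt hC)
      _ ≤ ((n-t).choose k : ℝ) := key

set_option maxHeartbeats 1000000 in
/-- Middle case: concentration on `{m, m+1}` with `m+2 ≤ min(k,t)` is impossible
(when the mean exceeds 3/2). -/
lemma middle_case (n k t m : ℕ) (hkn : k + t ≤ n) (hmu : 3*n < 2*(k*t))
    (hmt : m+2 ≤ t) (hmk : m+2 ≤ k)
    (hcon : hypPr n k t m + hypPr n k t (m+1) ≥ 1 - 1/100) : False := by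
  obtain ⟨u, hu⟩ := Nat.exists_eq_add_of_le hmt
  obtain ⟨v, hv⟩ := Nat.exists_eq_add_of_le hmk
  obtain ⟨w, hw⟩ := Nat.exists_eq_add_of_le hkn
  have htn : t ≤ n := by omega
  have hknn : k ≤ n := by omega
  have idA := hypPr_ratio n k t m (by omega) (by omega) (by omega)
  have idB := hypPr_ratio n k t (m+1) (by omega) (by omega) (by omega)
  have e1 : n - t - k + m + 1 = w + m + 1 := by omega
  have e2 : t - m = u + 2 := by omega
  have e3 : k - m = v + 2 := by omega
  have e4 : n - t - k + (m+1) + 1 = w + m + 2 := by omega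
  have e5 : t - (m+1) = u + 1 := by omega
  have e6 : k - (m+1) = v + 1 := by omega
  have e7 : m + 1 + 1 = m + 2 := by omega
  rw [e1, e2, e3] at idA
  rw [e4, e5, e6, e7] at idB
  push_cast at idA idB
  have h3B := hypPr_triple_le_one n k t m htn hknn
  set P := hypPr n k t m with hPdef
  set Q := hypPr n k t (m+1) with hQdef
  set R := hypPr n k t (m+2) with hRdef
  have hP0 : 0 ≤ P := hypPr_nonneg n k t m
  have hP1 : 0 ≤ Q := hypPr_nonneg n k t (m+1)
  have hP2 : 0 ≤ R := hypPr_nonneg n k t (m+2)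
  have hu0 : (0:ℝ) ≤ (u:ℝ) := Nat.cast_nonneg u
  have hv0 : (0:ℝ) ≤ (v:ℝ) := Nat.cast_nonneg v
  have hw0 : (0:ℝ) ≤ (w:ℝ) := Nat.cast_nonneg w
  have hm0 : (0:ℝ) ≤ (m:ℝ) := Nat.cast_nonneg m
  rcases le_or_gt P Q with hB | hA
  · -- branch B : p(m) ≤ p(m+1)
    have hQ : (1 - 1/100)/2 ≤ Q := by linarith
    have hQpos : (0:ℝ) < Q := by linarith
    have hfac : ((m:ℝ)+1) * ((w:ℝ)+(m:ℝ)+1) ≤ ((u:ℝ)+2)*((v:ℝ)+2) := by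
      have h' : P * (((u:ℝ)+2)*((v:ℝ)+2)) ≤ Q * (((u:ℝ)+2)*((v:ℝ)+2)) := by
        apply mul_le_mul_of_nonneg_right hB
        positivity
      have h'' : Q * (((m:ℝ)+1) * ((w:ℝ)+(m:ℝ)+1)) ≤ Q * (((u:ℝ)+2)*((v:ℝ)+2)) := by
        nlinarith [idA]
      exact le_of_mul_le_mul_left h'' hQpos
    have hmul : ((m:ℝ)+2) * ((w:ℝ)+(m:ℝ)+2) ≤ 16*(((u:ℝ)+1)*((v:ℝ)+1)) := by
      nlinarith [hfac]
    have hR : Q ≤ 16 * R := by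
      have hpos2 : (0:ℝ) < ((m:ℝ)+2) * ((w:ℝ)+(m:ℝ)+2) := by positivity
      have hh : Q * (((m:ℝ)+2) * ((w:ℝ)+(m:ℝ)+2))
          ≤ (16 * R) * (((m:ℝ)+2) * ((w:ℝ)+(m:ℝ)+2)) := by
        have key := mul_le_mul_of_nonneg_left hmul hP1
        linarith [idB, key]
      exact le_of_mul_le_mul_right hh hpos2
    linarith
  · -- branch A : p(m+1) < p(m)
    have hP : (1 - 1/100)/2 ≤ P := by linarith
    have hPpos : (0:ℝ) < P := by linarith
    have hfacA : ((u:ℝ)+2)*((v:ℝ)+2) ≤ ((m:ℝ)+1) * ((w:ℝ)+(m:ℝ)+1) := by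
      have h' : Q * (((m:ℝ)+1) * ((w:ℝ)+(m:ℝ)+1)) ≤ P * (((m:ℝ)+1) * ((w:ℝ)+(m:ℝ)+1)) := by
        apply mul_le_mul_of_nonneg_right (le_of_lt hA)
        positivity
      have h'' : P * (((u:ℝ)+2)*((v:ℝ)+2)) ≤ P * (((m:ℝ)+1) * ((w:ℝ)+(m:ℝ)+1)) := by
        nlinarith [idA]
      exact le_of_mul_le_mul_left h'' hPpos
    rcases Nat.eq_zero_or_pos m with hm | hm
    · -- m = 0 : use the mean hypothesis
      subst hm
      have hmuR : 3*((n:ℕ):ℝ) < 2*(((k:ℕ):ℝ)*((t:ℕ):ℝ)) := by exact_mod_cast hmu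
      have hnR : ((n:ℕ):ℝ) = (k:ℝ) + (t:ℝ) + (w:ℝ) := by exact_mod_cast hw
      have htR : ((t:ℕ):ℝ) = (u:ℝ) + 2 := by
        have h : t = u + 2 := by omega
        exact_mod_cast h
      have hkR : ((k:ℕ):ℝ) = (v:ℝ) + 2 := by
        have h : k = v + 2 := by omega
        exact_mod_cast h
      rw [htR, hkR] at hnR
      rw [hnR, htR, hkR] at hmuR
      norm_num at hfacA
      nlinarith [hmuR, hfacA]
    · -- m ≥ 1
      have id0 := hypPr_ratio n k t (m-1) (by omega) (by omega) (by omega)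
      have f0 : m - 1 + 1 = m := by omega
      rw [f0] at id0
      have f1 : n - t - k + (m-1) + 1 = w + m := by omega
      have f2 : t - (m-1) = u + 3 := by omega
      have f3 : k - (m-1) = v + 3 := by omega
      rw [f1, f2, f3] at id0
      have h3A := hypPr_triple_le_one n k t (m-1) htn hknn
      have f4 : m - 1 + 2 = m + 1 := by omega
      rw [f0, f4] at h3A
      set S := hypPr n k t (m-1) with hSdef
      push_cast at id0
      have hS0 : 0 ≤ S := hypPr_nonneg n k t (m-1)
      have hm1 : (1:ℝ) ≤ (m:ℝ) := by exact_mod_cast hm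
      have hc : ((u:ℝ)+3)*((v:ℝ)+3) ≤ 9*((m:ℝ) * ((w:ℝ)+(m:ℝ))) := by
        nlinarith [hfacA]
      have hcP : P ≤ 9 * S := by
        have hpos0 : (0:ℝ) < ((u:ℝ)+3)*((v:ℝ)+3) := by positivity
        have hh : P * (((u:ℝ)+3)*((v:ℝ)+3)) ≤ (9 * S) * (((u:ℝ)+3)*((v:ℝ)+3)) := by
          have key := mul_le_mul_of_nonneg_left hc hP0
          linarith [id0, key]
        exact le_of_mul_le_mul_right hh hpos0
      linarith

set_option maxHeartbeats 1000000 in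
/-- Top case: when `t ≤ k`, `4 ≤ t` and the mass sits on `{m, m+1}` with `m ≥ t-1`,
we get a contradiction. -/
lemma top_case (n k t m : ℕ) (htk : t ≤ k) (ht4 : 4 ≤ t) (h2k : 2*k ≤ n)
    (hkn : k + t ≤ n) (hm : t ≤ m + 1)
    (hcon : hypPr n k t m + hypPr n k t (m+1) ≥ 1 - 1/100) : False := by
  have htn : t ≤ n := by omega
  have hknn : k ≤ n := by omega
  by_cases hm1 : t + 1 ≤ m
  · rw [hypPr_eq_zero_of_lt n k t m (by omega),
      hypPr_eq_zero_of_lt n k t (m+1) (by omega)] at hcon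
    norm_num at hcon
  · -- m = t - 1 or m = t
    obtain ⟨a, ha⟩ : ∃ a, t = a + 4 := ⟨t - 4, by omega⟩
    obtain ⟨b, hb⟩ : ∃ b, k = a + 4 + b := ⟨k - t, by omega⟩
    obtain ⟨w, hw⟩ : ∃ w, n = (a+4) + (a+4+b) + w := ⟨n - k - t, by omega⟩
    have hbw : b ≤ w := by omega
    have hsum : hypPr n k t (a+3) + hypPr n k t (a+4) ≥ 1 - 1/100 := by
      rcases (by omega : m = a + 3 ∨ m = a + 4) with hm' | hm'
      · subst hm'
        have e : a + 3 + 1 = a + 4 := by omega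
        rw [e] at hcon
        exact hcon
      · subst hm'
        rw [hypPr_eq_zero_of_lt n k t (a+4+1) (by omega)] at hcon
        have h0 := hypPr_nonneg n k t (a+3)
        linarith
    have id1 := hypPr_ratio n k t (a+3) (by omega) (by omega) (by omega)
    have id2 := hypPr_ratio n k t (a+2) (by omega) (by omega) (by omega)
    have e1 : a + 3 + 1 = a + 4 := by omega
    have e2 : a + 2 + 1 = a + 3 := by omega
    have e3 : n - t - k + (a+3) + 1 = w + a + 4 := by omega
    have e4 : t - (a+3) = 1 := by omega
    have e5 : k - (a+3) = b + 1 := by omega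
    have e6 : n - t - k + (a+2) + 1 = w + a + 3 := by omega
    have e7 : t - (a+2) = 2 := by omega
    have e8 : k - (a+2) = b + 2 := by omega
    rw [e1, e3, e4, e5] at id1
    rw [e2, e6, e7, e8] at id2
    push_cast at id1 id2
    set P4 := hypPr n k t (a+4) with h4def
    set P3 := hypPr n k t (a+3) with h3def
    set P2 := hypPr n k t (a+2) with h2def
    have hn4 : 0 ≤ P4 := hypPr_nonneg n k t (a+4)
    have hn3 : 0 ≤ P3 := hypPr_nonneg n k t (a+3)
    have hle2 : P2 ≤ 1 := hypPr_le_one n k t (a+2) htn hknn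
    have ha0 : (0:ℝ) ≤ (a:ℝ) := Nat.cast_nonneg a
    have hb0 : (0:ℝ) ≤ (b:ℝ) := Nat.cast_nonneg b
    have hbwR : (b:ℝ) ≤ (w:ℝ) := by exact_mod_cast hbw
    -- P3 ≥ 4 P4
    have h34 : 4 * P4 ≤ P3 := by
      have hco : 4 * ((b:ℝ)+1) ≤ ((a:ℝ)+4) * ((w:ℝ)+(a:ℝ)+4) := by nlinarith
      have hpos : (0:ℝ) < (b:ℝ) + 1 := by linarith
      have hh : (4 * P4) * ((b:ℝ)+1) ≤ P3 * ((b:ℝ)+1) := by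
        have key := mul_le_mul_of_nonneg_left hco hn4
        linarith [id1, key]
      exact le_of_mul_le_mul_right hh hpos
    -- P2 ≥ (3/2) P3
    have h23 : 3 * P3 ≤ 2 * P2 := by
      have hco : 3 * (2*((b:ℝ)+2)) ≤ 2 * (((a:ℝ)+3) * ((w:ℝ)+(a:ℝ)+3)) := by nlinarith
      have hpos : (0:ℝ) < 2*((b:ℝ)+2) := by linarith
      have hh : (3 * P3) * (2*((b:ℝ)+2)) ≤ (2 * P2) * (2*((b:ℝ)+2)) := by
        have key := mul_le_mul_of_nonneg_left hco hn3
        linarith [id2, key]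
      exact le_of_mul_le_mul_right hh hpos
    linarith

/-- there are absolute constants `γ₀, c > 0` such that whenever a
hypergeometric variable with parameters `k, t ≤ n/2` is concentrated on two consecutive
values `{m, m+1}` up to `γ₀`, it takes the value `0` with probability at least `c`,
and `t ≤ (3/2)(n/k)`. -/
theorem hypergeometric_concentration :
    ∃ γ₀ > (0 : ℝ), ∃ c > (0 : ℝ), ∀ n k t : ℕ, 1 ≤ k → 1 ≤ t → 2 * k ≤ n → 2 * t ≤ n →
      ∀ m : ℕ, hypPr n k t m + hypPr n k t (m + 1) ≥ 1 - γ₀ →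
        hypPr n k t 0 ≥ c ∧ (t : ℝ) ≤ (3 / 2) * ((n : ℝ) / k) := by
  refine ⟨1/100, by norm_num, 1/2^200, by norm_num, ?_⟩
  intro n k t hk ht h2k h2t m hcon
  have hkn : k + t ≤ n := by omega
  by_cases hmu : 2*(k*t) ≤ 3*n
  · constructor
    · rcases le_total t k with htk | hkt
      · exact p0_bound_aux n k t ht htk h2k hmu
      · rw [hypPr_symm n k t 0 hkn]
        exact p0_bound_aux n t k hk hkt h2t (by rw [Nat.mul_comm k t] at hmu; exact hmu)
    · have hkR : (0:ℝ) < (k:ℝ) := by exact_mod_cast hk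
      have hmuR : 2*((k:ℝ)*(t:ℝ)) ≤ 3*(n:ℝ) := by exact_mod_cast hmu
      rw [show (3:ℝ)/2 * ((n:ℝ)/(k:ℝ)) = (3*(n:ℝ))/(2*(k:ℝ)) by ring,
        le_div_iff₀ (by positivity)]
      nlinarith
  · exfalso
    have hmu' : 3*n < 2*(k*t) := by omega
    have ht4 : 4 ≤ t := by
      have h1 : 2*k*3 < 2*k*t := by
        calc 2*k*3 ≤ 3*n := by omega
          _ < 2*(k*t) := hmu'
          _ = 2*k*t := by ring
      have := Nat.lt_of_mul_lt_mul_left h1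
      omega
    have hk4 : 4 ≤ k := by
      have h1 : 2*t*3 < 2*t*k := by
        calc 2*t*3 ≤ 3*n := by omega
          _ < 2*(k*t) := hmu'
          _ = 2*t*k := by ring
      have := Nat.lt_of_mul_lt_mul_left h1
      omega
    have hconS : hypPr n t k m + hypPr n t k (m+1) ≥ 1 - 1/100 := by
      rw [← hypPr_symm n k t m hkn, ← hypPr_symm n k t (m+1) hkn]
      exact hcon
    by_cases hmt : m+2 ≤ t
    · by_cases hmk : m+2 ≤ k
      · exact middle_case n k t m hkn hmu' hmt hmk hcon
      · exact top_case n t k m (by omega) hk4 h2t (by omega) (by omega) hconS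
    · rcases le_total t k with htk | hkt
      · exact top_case n k t m htk ht4 h2k hkn (by omega) hcon
      · exact top_case n t k m hkt hk4 h2t (by omega) (by omega) hconS
end

section
/- Let $X$ be hypergeometric with parameters $n, k, t$ (number of successes when drawing $k$ from $n$ with $t$ marked), with $4 \le t, k \le n/2$. Let $s_0 = \lfloor (k+1)(t+1)/(n+2) \rfloor$ and suppose $s_0 \ge 1$. Then $s_0 + 2 \le \min(k, t)$, and the ratio $\rho_{s} = \Pr[X = s+1]/\Pr[X = s]$ satisfies $\rho_{s_0+1} \ge \rho_{s_0}/16$. -/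
/-- The consecutive-ratio `ρ_s = Pr[X = s+1] / Pr[X = s]`. -/
noncomputable def hypRatio (n k t s : ℕ) : ℝ := hypPr n k t (s + 1) / hypPr n k t s

lemma hypRatio_eq (n k t s : ℕ) (hsk : s + 1 ≤ k) (hst : s + 1 ≤ t) (htk : t + k ≤ n) :
    hypRatio n k t s =
      (((t - s) * (k - s) : ℕ) : ℝ) / (((s + 1) * (n - t - k + s + 1) : ℕ) : ℝ) := by
  have hkn : k ≤ n := by omega
  have hN : 0 < (n.choose k : ℝ) := by exact_mod_cast Nat.choose_pos hkn
  have hx0 : 0 < (t.choose s : ℝ) := by exact_mod_cast Nat.choose_pos (by omega)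
  have hy0 : 0 < ((n - t).choose (k - s) : ℝ) := by
    exact_mod_cast Nat.choose_pos (by omega)
  have hA : t.choose (s + 1) * (s + 1) = t.choose s * (t - s) := Nat.choose_succ_right_eq t s
  have hB : (n - t).choose (k - s) * (k - s)
      = (n - t).choose (k - (s + 1)) * (n - t - k + s + 1) := by
    have h := Nat.choose_succ_right_eq (n - t) (k - s - 1)
    have h1 : k - s - 1 + 1 = k - s := by omega
    have h2 : n - t - (k - s - 1) = n - t - k + s + 1 := by omega
    have h3 : k - (s + 1) = k - s - 1 := by omega
    rw [h1, h2] at h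
    rw [h3, ← h]
  have hAc : (t.choose (s + 1) : ℝ) * (s + 1) = (t.choose s : ℝ) * ((t - s : ℕ) : ℝ) := by
    exact_mod_cast congrArg (Nat.cast : ℕ → ℝ) hA
  have hBc : ((n - t).choose (k - s) : ℝ) * ((k - s : ℕ) : ℝ)
      = ((n - t).choose (k - (s + 1)) : ℝ) * ((n - t - k + s + 1 : ℕ) : ℝ) := by
    exact_mod_cast congrArg (Nat.cast : ℕ → ℝ) hB
  unfold hypRatio hypPr
  rw [if_pos hsk, if_pos (by omega : s ≤ k)]
  rw [div_div_div_cancel_right₀]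
  · push_cast at hAc hBc ⊢
    rw [div_eq_div_iff (by positivity) (by positivity)]
    linear_combination (((n - t).choose (k - (s + 1)) : ℝ) * (((n - t - k : ℕ) : ℝ) + s + 1)) * hAc
      - ((t.choose s : ℝ) * ((t - s : ℕ) : ℝ)) * hBc
  · exact hN.ne'


/-- for `4 ≤ t, k ≤ n/2`, if the mode `s₀ = ⌊(k+1)(t+1)/(n+2)⌋` is at
least `1`, then `s₀ + 2 ≤ min(k, t)` and `ρ_{s₀+1} ≥ ρ_{s₀}/16`. -/
theorem hypergeometric_mode_ratio (n k t : ℕ) (ht : 4 ≤ t) (hk : 4 ≤ k)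
    (htn : 2 * t ≤ n) (hkn : 2 * k ≤ n)
    (s₀ : ℕ) (hs₀ : s₀ = (k + 1) * (t + 1) / (n + 2)) (hs₀1 : 1 ≤ s₀) :
    s₀ + 2 ≤ min k t ∧ hypRatio n k t (s₀ + 1) ≥ hypRatio n k t s₀ / 16 := by
  have hmul : s₀ * (n + 2) ≤ (k + 1) * (t + 1) := by
    rw [hs₀]; exact Nat.div_mul_le_self _ _
  have h2k : 2 * s₀ ≤ k + 1 := by
    have h1 : 2 * s₀ * (t + 1) ≤ (k + 1) * (t + 1) := by
      calc 2 * s₀ * (t + 1) = s₀ * (2 * (t + 1)) := by ring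
        _ ≤ s₀ * (n + 2) := Nat.mul_le_mul_left _ (by omega)
        _ ≤ (k + 1) * (t + 1) := hmul
    exact Nat.le_of_mul_le_mul_right h1 (by omega)
  have h2t : 2 * s₀ ≤ t + 1 := by
    have h1 : 2 * s₀ * (k + 1) ≤ (t + 1) * (k + 1) := by
      calc 2 * s₀ * (k + 1) = s₀ * (2 * (k + 1)) := by ring
        _ ≤ s₀ * (n + 2) := Nat.mul_le_mul_left _ (by omega)
        _ ≤ (t + 1) * (k + 1) := by rw [Nat.mul_comm (t + 1) (k + 1)]; exact hmul
    exact Nat.le_of_mul_le_mul_right h1 (by omega)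
  have hk2 : s₀ + 2 ≤ k := by omega
  have ht2 : s₀ + 2 ≤ t := by omega
  refine ⟨by omega, ?_⟩
  rw [hypRatio_eq n k t s₀ (by omega) (by omega) (by omega),
      hypRatio_eq n k t (s₀ + 1) (by omega) (by omega) (by omega)]
  obtain ⟨a, ha⟩ : ∃ a, t = s₀ + 2 + a := ⟨t - s₀ - 2, by omega⟩
  obtain ⟨b, hb⟩ : ∃ b, k = s₀ + 2 + b := ⟨k - s₀ - 2, by omega⟩
  obtain ⟨m, hm⟩ : ∃ m, n = t + k + m := ⟨n - t - k, by omega⟩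
  have e1 : t - s₀ = a + 2 := by omega
  have e2 : k - s₀ = b + 2 := by omega
  have e3 : t - (s₀ + 1) = a + 1 := by omega
  have e4 : k - (s₀ + 1) = b + 1 := by omega
  have e5 : n - t - k + s₀ + 1 = m + s₀ + 1 := by omega
  have e6 : n - t - k + (s₀ + 1) + 1 = m + s₀ + 2 := by omega
  rw [e1, e2, e3, e4, e5, e6]
  push_cast
  rw [ge_iff_le, div_le_iff₀ (by positivity), div_mul_eq_mul_div, div_le_iff₀ (by positivity),
      div_mul_eq_mul_div, le_div_iff₀ (by positivity)]
  have hA : ((a : ℝ) + 2) * ((b : ℝ) + 2) * (((s₀ : ℝ) + 1 + 1) * ((m : ℝ) + s₀ + 2))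
      ≤ (2 * ((a : ℝ) + 1)) * (2 * ((b : ℝ) + 1)) * ((2 * ((s₀ : ℝ) + 1)) * (2 * ((m : ℝ) + s₀ + 1))) := by
    have h0 : (0:ℝ) ≤ (a:ℝ) := Nat.cast_nonneg a
    have h1 : (0:ℝ) ≤ (b:ℝ) := Nat.cast_nonneg b
    have h2 : (0:ℝ) ≤ (s₀:ℝ) := Nat.cast_nonneg s₀
    have h3 : (0:ℝ) ≤ (m:ℝ) := Nat.cast_nonneg m
    gcongr <;> nlinarith
  nlinarith [hA]
end

section
/- Let $2 \le k \le n/2$, $p = k/n$, and suppose $f\colon \binom{[n]}{k} \to \{0,1\}$ satisfies $\|f - \ell\|^2 \le \epsilon$ for an affine function $\ell = \sum_i c_i x_i$ (uniform measure on the slice). Then there exist reals $c, d$ with $|c - d| = 1$ and a set $S \subseteq [n]$ with $|S| \le n/2$ such that $|c_j - c|^2 \le 8\epsilon/p$ for all $j \in S$ and $|c_j - d|^2 \le 8\epsilon/p$ for all $j \notin S$. -/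
/-- Expectation over the uniform measure on the slice. -/
noncomputable def sliceExp (n k : ℕ) (g : Finset (Fin n) → ℝ) : ℝ :=
  (∑ T ∈ theSlice n k, g T) / (n.choose k)

lemma pair_bound (n k : ℕ) (hk : 2 ≤ k) (hkn : 2 * k ≤ n)
    (f : Finset (Fin n) → ℝ) (c : Fin n → ℝ) (ε : ℝ)
    (hbool : ∀ T ∈ theSlice n k, f T = 0 ∨ f T = 1)
    (hsum : ∑ T ∈ theSlice n k, (f T - ∑ i ∈ T, c i) ^ 2 ≤ ε * (n.choose k))
    (hε : 0 ≤ ε)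
    (i j : Fin n) (hij : i ≠ j) :
    ∃ m : ℝ, (m = -1 ∨ m = 0 ∨ m = 1) ∧
      (c i - c j - m) ^ 2 ≤ 8 * ε / ((k : ℝ) / n) := by
  classical
  by_contra hcon
  push_neg at hcon
  set B : ℝ := 8 * ε / ((k : ℝ) / n) with hBdef
  set u : Finset (Fin n) → ℝ := fun T => (f T - ∑ x ∈ T, c x) ^ 2 with hu
  set A : Finset (Finset (Fin n)) :=
    (theSlice n k).filter (fun T => i ∈ T ∧ j ∉ T) with hA
  set σ : Finset (Fin n) → Finset (Fin n) := fun T => insert j (T.erase i) with hσ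
  have hmemA : ∀ T ∈ A, T ∈ theSlice n k ∧ i ∈ T ∧ j ∉ T := by
    intro T hT
    have := Finset.mem_filter.mp hT
    exact ⟨this.1, this.2⟩
  have hcardT : ∀ T ∈ theSlice n k, T.card = k := by
    intro T hT
    simpa [theSlice, Finset.mem_powersetCard_univ] using hT
  -- the swap stays in the slice
  have hσmem : ∀ T ∈ A, σ T ∈ theSlice n k := by
    intro T hT
    obtain ⟨hTs, hiT, hjT⟩ := hmemA T hT
    have hji : j ∉ T.erase i := fun h => hjT (Finset.mem_of_mem_erase h)
    have hcard : (σ T).card = k := by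
      rw [hσ]
      simp only
      rw [Finset.card_insert_of_notMem hji, Finset.card_erase_of_mem hiT,
        hcardT T hTs]
      omega
    simpa [theSlice, Finset.mem_powersetCard_univ] using hcard
  -- sum over swapped set
  have hσsum : ∀ T ∈ A, (∑ x ∈ σ T, c x) = (∑ x ∈ T, c x) - c i + c j := by
    intro T hT
    obtain ⟨hTs, hiT, hjT⟩ := hmemA T hT
    have hji : j ∉ T.erase i := fun h => hjT (Finset.mem_of_mem_erase h)
    rw [hσ]
    simp only
    rw [Finset.sum_insert hji, Finset.sum_erase_eq_sub hiT]
    ring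
  -- key pointwise bound
  have hkey : ∀ T ∈ A, B < 2 * u T + 2 * u (σ T) := by
    intro T hT
    obtain ⟨hTs, hiT, hjT⟩ := hmemA T hT
    have hfT := hbool T hTs
    have hfσ := hbool _ (hσmem T hT)
    have hm : f T - f (σ T) = -1 ∨ f T - f (σ T) = 0 ∨ f T - f (σ T) = 1 := by
      rcases hfT with h | h <;> rcases hfσ with h' | h' <;> rw [h, h'] <;> norm_num
    have hBm := hcon (f T - f (σ T)) hm
    have halg : (c i - c j - (f T - f (σ T))) ^ 2 ≤ 2 * u T + 2 * u (σ T) := by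
      have hss := hσsum T hT
      simp only [hu]
      rw [hss]
      nlinarith [sq_nonneg ((f T - ∑ x ∈ T, c x) +
        (f (σ T) - ((∑ x ∈ T, c x) - c i + c j)))]
    linarith
  -- injectivity of the swap on A
  have hinj : Set.InjOn σ A := by
    intro T1 h1 T2 h2 heq
    obtain ⟨_, hi1, hj1⟩ := hmemA T1 h1
    obtain ⟨_, hi2, hj2⟩ := hmemA T2 h2
    have hji1 : j ∉ T1.erase i := fun h => hj1 (Finset.mem_of_mem_erase h)
    have hji2 : j ∉ T2.erase i := fun h => hj2 (Finset.mem_of_mem_erase h)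
    have herase : T1.erase i = T2.erase i := by
      have := congrArg (fun s => Finset.erase s j) heq
      simpa [hσ, Finset.erase_insert hji1, Finset.erase_insert hji2] using this
    have := congrArg (fun s => insert i s) herase
    simpa [Finset.insert_erase hi1, Finset.insert_erase hi2] using this
  -- cardinality of A
  have hcardA : A.card = (n - 2).choose (k - 1) := by
    have h2 : (((Finset.univ : Finset (Fin n)).erase i).erase j).card = n - 2 := by
      rw [Finset.card_erase_of_mem (by simp [hij.symm]),
        Finset.card_erase_of_mem (by simp)]
      simp only [Finset.card_univ, Fintype.card_fin]
      omega
    have hbij : A.card =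
        (Finset.powersetCard (k - 1)
          (((Finset.univ : Finset (Fin n)).erase i).erase j)).card := by
      refine Finset.card_bij' (fun T _ => T.erase i) (fun T _ => insert i T) ?_ ?_ ?_ ?_
      · intro T hT
        obtain ⟨hTs, hiT, hjT⟩ := hmemA T hT
        rw [Finset.mem_powersetCard]
        constructor
        · intro x hx
          have hxi := Finset.ne_of_mem_erase hx
          have hxT := Finset.mem_of_mem_erase hx
          have hxj : x ≠ j := fun h => hjT (h ▸ hxT)
          simp [hxi, hxj]
        · rw [Finset.card_erase_of_mem hiT, hcardT T hTs]
      · intro T hT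
        rw [Finset.mem_powersetCard] at hT
        obtain ⟨hsub, hcard⟩ := hT
        have hiT : i ∉ T := fun h => by
          have := hsub h
          simp at this
        have hjT : j ∉ T := fun h => by
          have := hsub h
          simp at this
        rw [hA, Finset.mem_filter]
        refine ⟨?_, Finset.mem_insert_self i T, ?_⟩
        · have : (insert i T).card = k := by
            rw [Finset.card_insert_of_notMem hiT, hcard]
            omega
          simpa [theSlice, Finset.mem_powersetCard_univ] using this
        · intro h
          rcases Finset.mem_insert.mp h with h | h
          · exact hij h.symm
          · exact hjT h
      · intro T hT
        obtain ⟨_, hiT, _⟩ := hmemA T hT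
        exact Finset.insert_erase hiT
      · intro T hT
        rw [Finset.mem_powersetCard] at hT
        have hiT : i ∉ T := fun h => by
          have := hT.1 h
          simp at this
        exact Finset.erase_insert hiT
    rw [hbij, Finset.card_powersetCard, h2]
  have hAne : A.Nonempty := by
    rw [← Finset.card_pos, hcardA]
    exact Nat.choose_pos (by omega)
  -- sums bounds
  have h1 : ∑ T ∈ A, u T ≤ ε * (n.choose k) := by
    refine le_trans (Finset.sum_le_sum_of_subset_of_nonneg
      (Finset.filter_subset _ _) (fun T _ _ => sq_nonneg _)) hsum
  have h2 : ∑ T ∈ A, u (σ T) ≤ ε * (n.choose k) := by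
    have heq : ∑ T ∈ A, u (σ T) = ∑ T' ∈ A.image σ, u T' :=
      (Finset.sum_image (fun x hx y hy h => hinj hx hy h)).symm
    rw [heq]
    refine le_trans (Finset.sum_le_sum_of_subset_of_nonneg ?_
      (fun T _ _ => sq_nonneg _)) hsum
    intro T' hT'
    obtain ⟨T, hT, rfl⟩ := Finset.mem_image.mp hT'
    exact hσmem T hT
  have hlt : (A.card : ℝ) * B < 4 * (ε * (n.choose k)) := by
    have hstrict := Finset.sum_lt_sum_of_nonempty hAne hkey
    rw [Finset.sum_const, nsmul_eq_mul] at hstrict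
    have hsplit : ∑ T ∈ A, (2 * u T + 2 * u (σ T)) =
        2 * (∑ T ∈ A, u T) + 2 * (∑ T ∈ A, u (σ T)) := by
      rw [Finset.sum_add_distrib, Finset.mul_sum, Finset.mul_sum]
    rw [hsplit] at hstrict
    linarith
  -- counting inequality over ℕ
  have hnat : k * n.choose k ≤ 2 * n * A.card := by
    rw [hcardA]
    have e1 : n * (n - 1).choose (k - 1) = n.choose k * k := by
      have h := Nat.add_one_mul_choose_eq (n - 1) (k - 1)
      rw [show n - 1 + 1 = n by omega, show k - 1 + 1 = k by omega] at h
      exact h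
    have e2 : (n - 1).choose (k - 1) = (n - 2).choose (k - 2) + (n - 2).choose (k - 1) := by
      have h := Nat.choose_succ_succ (n - 2) (k - 2)
      rw [show (n - 2).succ = n - 1 by omega, show (k - 2).succ = k - 1 by omega] at h
      first
        | exact h
        | (rw [show n - 2 + 1 = n - 1 by omega, show k - 2 + 1 = k - 1 by omega] at h; exact h)
    have e3 : (n - 2).choose (k - 2) ≤ (n - 2).choose (k - 1) := by
      have h := Nat.choose_succ_right_eq (n - 2) (k - 2)
      rw [show k - 2 + 1 = k - 1 by omega] at h
      -- h : (n-2).choose (k-1) * (k-1) = (n-2).choose (k-2) * (n - 2 - (k - 2))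
      have hge : k - 1 ≤ n - 2 - (k - 2) := by omega
      have : (n - 2).choose (k - 2) * (k - 1) ≤ (n - 2).choose (k - 1) * (k - 1) := by
        calc (n - 2).choose (k - 2) * (k - 1)
            ≤ (n - 2).choose (k - 2) * (n - 2 - (k - 2)) := Nat.mul_le_mul_left _ hge
          _ = (n - 2).choose (k - 1) * (k - 1) := h.symm
      exact Nat.le_of_mul_le_mul_right this (by omega)
    calc k * n.choose k = n * (n - 1).choose (k - 1) := by rw [e1]; ring
      _ = n * ((n - 2).choose (k - 2) + (n - 2).choose (k - 1)) := by rw [e2]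
      _ ≤ n * ((n - 2).choose (k - 1) + (n - 2).choose (k - 1)) := by
          exact Nat.mul_le_mul_left _ (by omega)
      _ = 2 * n * (n - 2).choose (k - 1) := by ring
  have hcast : (k : ℝ) * (n.choose k : ℝ) ≤ 2 * (n : ℝ) * (A.card : ℝ) := by
    exact_mod_cast hnat
  have hkR : (0 : ℝ) < k := by exact_mod_cast (by omega : 0 < k)
  have hnR : (0 : ℝ) < n := by exact_mod_cast (by omega : 0 < n)
  have hBval : B = 8 * ε * n / k := by
    rw [hBdef]
    field_simp
  rw [hBval] at hlt
  have hlt2 : (A.card : ℝ) * (8 * ε * n) < 4 * (ε * (n.choose k)) * k := by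
    have := mul_lt_mul_of_pos_right hlt hkR
    calc (A.card : ℝ) * (8 * ε * n) = (A.card : ℝ) * (8 * ε * n / k) * k := by
          field_simp
      _ < 4 * (ε * (n.choose k)) * k := this
  nlinarith [mul_le_mul_of_nonneg_left hcast (by positivity : (0:ℝ) ≤ 4 * ε)]

/-- concentration of the coefficients. If a Boolean `f` on the slice
(`2 ≤ k ≤ n/2`, `p = k/n`) is `ε`-close to `∑ᵢ cᵢ xᵢ`, then the coefficients are
`√(8ε/p)`-close to two values `c, d` at distance exactly `1`, with the value `c`
taken on a set of at most `n/2` coordinates. -/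
theorem coefficient_concentration (n k : ℕ) (hk : 2 ≤ k) (hkn : 2 * k ≤ n)
    (f : Finset (Fin n) → ℝ) (c : Fin n → ℝ) (ε : ℝ)
    (hbool : ∀ T ∈ theSlice n k, f T = 0 ∨ f T = 1)
    (hclose : sliceExp n k (fun T => (f T - ∑ i ∈ T, c i) ^ 2) ≤ ε) :
    ∃ a b : ℝ, |a - b| = 1 ∧ ∃ S : Finset (Fin n), 2 * S.card ≤ n ∧
      (∀ j ∈ S, (c j - a) ^ 2 ≤ 8 * ε / ((k : ℝ) / n)) ∧
      (∀ j ∉ S, (c j - b) ^ 2 ≤ 8 * ε / ((k : ℝ) / n)) := by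
  classical
  have hC : (0 : ℝ) < n.choose k := by
    exact_mod_cast Nat.choose_pos (by omega : k ≤ n)
  have hsum : ∑ T ∈ theSlice n k, (f T - ∑ i ∈ T, c i) ^ 2 ≤ ε * (n.choose k) := by
    rw [sliceExp, div_le_iff₀ hC] at hclose
    exact hclose
  have hsum0 : 0 ≤ ∑ T ∈ theSlice n k, (f T - ∑ i ∈ T, c i) ^ 2 :=
    Finset.sum_nonneg fun _ _ => sq_nonneg _
  have hε : 0 ≤ ε := by
    nlinarith
  have hδ : 0 ≤ 8 * ε / ((k : ℝ) / n) := by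
    have hkR : (0 : ℝ) < k := by exact_mod_cast (by omega : 0 < k)
    have hnR : (0 : ℝ) < n := by exact_mod_cast (by omega : 0 < n)
    positivity
  obtain ⟨j0, -, hj0⟩ := Finset.exists_min_image Finset.univ c
    ⟨⟨0, by omega⟩, Finset.mem_univ _⟩
  have hcover : ∀ jj : Fin n, (c jj - c j0) ^ 2 ≤ 8 * ε / ((k : ℝ) / n) ∨
      (c jj - (c j0 + 1)) ^ 2 ≤ 8 * ε / ((k : ℝ) / n) := by
    intro jj
    by_cases hjj : jj = j0
    · left
      simp [hjj, hδ]
    · obtain ⟨m, hm, hb⟩ := pair_bound n k hk hkn f c ε hbool hsum hε jj j0 hjj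
      have h0 : 0 ≤ c jj - c j0 := by linarith [hj0 jj (Finset.mem_univ jj)]
      rcases hm with rfl | rfl | rfl
      · left; nlinarith
      · left; simpa using hb
      · right
        have hrw : c jj - (c j0 + 1) = c jj - c j0 - 1 := by ring
        rw [hrw]; exact hb
  set S0 : Finset (Fin n) := Finset.univ.filter
    (fun jj => (c jj - c j0) ^ 2 ≤ 8 * ε / ((k : ℝ) / n)) with hS0
  by_cases hS : 2 * S0.card ≤ n
  · refine ⟨c j0, c j0 + 1, ?_, S0, hS, ?_, ?_⟩
    · have : c j0 - (c j0 + 1) = -1 := by ring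
      rw [this]; norm_num
    · intro jj hjj
      exact (Finset.mem_filter.mp hjj).2
    · intro jj hjj
      refine (hcover jj).resolve_left (fun h => hjj ?_)
      exact Finset.mem_filter.mpr ⟨Finset.mem_univ jj, h⟩
  · refine ⟨c j0 + 1, c j0, ?_, S0ᶜ, ?_, ?_, ?_⟩
    · have : c j0 + 1 - c j0 = 1 := by ring
      rw [this]; norm_num
    · have hcc : S0ᶜ.card = n - S0.card := by
        rw [Finset.card_compl]
        simp
      have hle : S0.card ≤ n := by
        have := Finset.card_le_univ S0
        simpa using this
      omega
    · intro jj hjj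
      have hjS0 : jj ∉ S0 := Finset.mem_compl.mp hjj
      refine (hcover jj).resolve_left (fun h => hjS0 ?_)
      exact Finset.mem_filter.mpr ⟨Finset.mem_univ jj, h⟩
    · intro jj hjj
      have hin : jj ∈ S0 := by simpa using hjj
      exact (Finset.mem_filter.mp hin).2
end
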